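/- Let (G; (ρ_0, …, ρ_{n−1})) be an irreducible string C-group representation of rank n ≥ 4 of a group G. If ρ_0 belongs to the subgroup generated by ρ_0ρ_2 and ρ_3, then (G; (ρ_1, ρ_0ρ_2, ρ_3, ρ_4, …, ρ_{n−1})) is a string C-group representation of G of rank n−1. -/

import Mathlib

/-- A string C-group representation of rank `n` of a group `G`: a family of `n`
involutions generating `G`, satisfying the commuting (string) property and the
intersection property. -/
def IsStringCGroupRep {G : Type*} [Group G] {n : ℕ} (ρ : Fin n → G) : Prop :=
  (∀ i, orderOf (ρ i) = 2) ∧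
  Subgroup.closure (Set.range ρ) = ⊤ ∧
  (∀ i j : Fin n, i.val + 1 < j.val → Commute (ρ i) (ρ j)) ∧
  (∀ I J : Set (Fin n),
    Subgroup.closure (ρ '' I) ⊓ Subgroup.closure (ρ '' J) = Subgroup.closure (ρ '' (I ∩ J)))

section RankReductionAux
open Subgroup

open Subgroup

/-- elements of closures of elementwise-commuting sets commute -/
lemma aux_commute_closure {G : Type*} [Group G] {A B : Set G}
    (h : ∀ a ∈ A, ∀ b ∈ B, Commute a b) :
    ∀ x ∈ closure A, ∀ y ∈ closure B, Commute x y := by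
  intro x hx
  induction hx using closure_induction with
  | mem a ha =>
    intro y hy
    induction hy using closure_induction with
    | mem b hb => exact h a ha b hb
    | one => exact Commute.one_right a
    | mul y z _ _ hy hz => exact (hy).mul_right hz
    | inv y _ hy => exact hy.inv_right
  | one => intro y hy; exact Commute.one_left y
  | mul x z _ _ hx hz => intro y hy; exact (hx y hy).mul_left (hz y hy)
  | inv x _ hx => intro y hy; exact (hx y hy).inv_left

lemma aux_mem_closure_union_comm {G : Type*} [Group G] {A B : Set G}
    (h : ∀ a ∈ A, ∀ b ∈ B, Commute a b) {g : G} (hg : g ∈ closure (A ∪ B)) :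
    ∃ x ∈ closure A, ∃ y ∈ closure B, g = x * y := by
  have hcomm := aux_commute_closure h
  let S : Subgroup G :=
    { carrier := {g | ∃ x ∈ closure A, ∃ y ∈ closure B, g = x * y}
      one_mem' := ⟨1, one_mem _, 1, one_mem _, (one_mul 1).symm⟩
      mul_mem' := by
        rintro p q ⟨x, hx, y, hy, rfl⟩ ⟨x', hx', y', hy', rfl⟩
        refine ⟨x * x', mul_mem hx hx', y * y', mul_mem hy hy', ?_⟩
        have := (hcomm x' hx' y hy).symm.eq
        rw [mul_assoc, ← mul_assoc y, this, mul_assoc, mul_assoc]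
      inv_mem' := by
        rintro p ⟨x, hx, y, hy, rfl⟩
        refine ⟨x⁻¹, inv_mem hx, y⁻¹, inv_mem hy, ?_⟩
        rw [mul_inv_rev, (hcomm x⁻¹ (inv_mem hx) y⁻¹ (inv_mem hy)).eq] }
  have : closure (A ∪ B) ≤ S := by
    rw [closure_le]
    rintro a (ha | ha)
    · exact ⟨a, subset_closure ha, 1, one_mem _, (mul_one a).symm⟩
    · exact ⟨1, one_mem _, a, subset_closure ha, (one_mul a).symm⟩
  exact this hg


/-- dihedral normal form -/
lemma aux_dihedral {G : Type*} [Group G] {a b : G} (ha : a * a = 1) (hb : b * b = 1)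
    {g : G} (hg : g ∈ closure ({a, b} : Set G)) :
    ∃ k : ℤ, g = (a * b) ^ k ∨ g = (a * b) ^ k * a := by
  set r := a * b with hr
  have hainv : a⁻¹ = a := inv_eq_of_mul_eq_one_right ha
  have hbinv : b⁻¹ = b := inv_eq_of_mul_eq_one_right hb
  have hsemi : SemiconjBy a r r⁻¹ := by
    have h1 : a * r = b := by rw [hr, ← mul_assoc, ha, one_mul]
    have h2 : r⁻¹ * a = b := by
      rw [hr, mul_inv_rev, mul_assoc, inv_mul_cancel, mul_one, hbinv]
    show a * r = r⁻¹ * a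
    rw [h1, h2]
  have hsa : ∀ k : ℤ, a * r ^ k = r ^ (-k) * a := by
    intro k
    have := (hsemi.zpow_right k).eq
    rwa [inv_zpow, ← zpow_neg] at this
  have hbform : b = r ^ (-1 : ℤ) * a := by
    rw [zpow_neg_one, hr, mul_inv_rev, mul_assoc, hainv, ha, mul_one, hbinv]
  induction hg using closure_induction with
  | mem x hx =>
    rcases hx with rfl | rfl
    · exact ⟨0, Or.inr (by simp)⟩
    · exact ⟨-1, Or.inr hbform⟩
  | one => exact ⟨0, Or.inl (by simp)⟩
  | mul x y _ _ hx hy =>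
    obtain ⟨k, hk | hk⟩ := hx <;> obtain ⟨m, hm | hm⟩ := hy
    · exact ⟨k + m, Or.inl (by rw [hk, hm, zpow_add])⟩
    · exact ⟨k + m, Or.inr (by rw [hk, hm, ← mul_assoc, zpow_add])⟩
    · refine ⟨k - m, Or.inr ?_⟩
      rw [hk, hm]
      calc r ^ k * a * r ^ m = r ^ k * (a * r ^ m) := by group
        _ = r ^ k * (r ^ (-m) * a) := by rw [hsa m]
        _ = r ^ (k - m) * a := by group
    · refine ⟨k - m, Or.inl ?_⟩
      rw [hk, hm]
      calc r ^ k * a * (r ^ m * a) = r ^ k * (a * r ^ m) * a := by group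
        _ = r ^ k * (r ^ (-m) * a) * a := by rw [hsa m]
        _ = r ^ (k - m) * (a * a) := by group
        _ = r ^ (k - m) := by rw [ha, mul_one]
  | inv x _ hx =>
    obtain ⟨k, hk | hk⟩ := hx
    · exact ⟨-k, Or.inl (by rw [hk, ← zpow_neg])⟩
    · refine ⟨k, Or.inr ?_⟩
      rw [hk]
      calc (r ^ k * a)⁻¹ = a⁻¹ * r ^ (-k) := by group
        _ = a * r ^ (-k) := by rw [hainv]
        _ = r ^ k * a := by rw [hsa (-k), neg_neg]

section
variable {G : Type*} [Group G]

lemma aux_conj {x y : G} (hx : x * x = 1) (hy : y * y = 1) (k : ℤ) :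
    x * (x * y) ^ k = (x * y) ^ (-k) * x := by
  have hxinv : x⁻¹ = x := inv_eq_of_mul_eq_one_right hx
  have hyinv : y⁻¹ = y := inv_eq_of_mul_eq_one_right hy
  have hsemi : SemiconjBy x (x * y) (x * y)⁻¹ := by
    have h1 : x * (x * y) = y := by rw [← mul_assoc, hx, one_mul]
    have h2 : (x * y)⁻¹ * x = y := by
      rw [mul_inv_rev, mul_assoc, hxinv, hx, mul_one, hyinv]
    show x * (x * y) = (x * y)⁻¹ * x
    rw [h1, h2]
  have := (hsemi.zpow_right k).eq
  rwa [inv_zpow, ← zpow_neg] at this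

lemma aux_ord2 {x z : G} (hx : x * x = 1) (hz : z * z = 1) (hne : x ≠ z)
    (hcom : x * z = z * x) : orderOf (x * z) = 2 := by
  have h1 : (x * z) ^ 2 = 1 := by
    rw [pow_two, mul_assoc, ← mul_assoc z, ← hcom, mul_assoc, hz, mul_one, hx]
  have h2 : x * z ≠ 1 := by
    intro h
    exact hne ((eq_inv_of_mul_eq_one_left h).trans (inv_eq_of_mul_eq_one_right hz))
  exact orderOf_eq_prime h1 h2

lemma aux_comm_of_rot {x y z : G} (hx : x * x = 1) (hy : y * y = 1) (hz : z * z = 1)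
    (k : ℤ) (hzk : z = (x * y) ^ k) : x * z = z * x := by
  have h1 : x * z * x = z := by
    conv_lhs => rw [hzk]
    rw [aux_conj hx hy k, mul_assoc, hx, mul_one, zpow_neg, ← hzk,
      inv_eq_of_mul_eq_one_right hz]
  conv_rhs => rw [← h1]
  rw [mul_assoc, mul_assoc, hx, mul_one]

lemma aux_klein {a c : G} (ha : a * a = 1) (hc : c * c = 1)
    (hac : a * c = c * a) {g : G} (hg : g ∈ closure ({a, c} : Set G)) :
    g = 1 ∨ g = a ∨ g = c ∨ g = a * c := by
  have hy : (a * c) * (a * c) = 1 := by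
    rw [mul_assoc, ← mul_assoc c, ← hac, mul_assoc, hc, mul_one, ha]
  have h2 : ((a*c) : G)^(2:ℤ) = 1 := by rw [zpow_two, hy]
  obtain ⟨k, hk | hk⟩ := aux_dihedral ha hc hg
  · rcases Int.even_or_odd k with ⟨m, hm⟩ | ⟨m, hm⟩
    · left
      rw [hk, hm, ← two_mul, zpow_mul, h2, one_zpow]
    · right; right; right
      rw [hk, hm, add_comm, zpow_add, zpow_one, zpow_mul, h2, one_zpow, mul_one]
  · rcases Int.even_or_odd k with ⟨m, hm⟩ | ⟨m, hm⟩
    · right; left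
      rw [hk, hm, ← two_mul, zpow_mul, h2, one_zpow, one_mul]
    · right; right; left
      rw [hk, hm, add_comm, zpow_add, zpow_one, zpow_mul, h2, one_zpow, mul_one,
        mul_assoc, ← hac, ← mul_assoc, ha, one_mul]

lemma aux_L3 {a b c : G}
    (ha : a * a = 1) (hb : b * b = 1) (hc : c * c = 1)
    (hac : a * c = c * a)
    (hab1 : a ≠ b) (hbc1 : b ≠ c)
    (hab2 : orderOf (a * b) ≠ 2) (hbc2 : orderOf (b * c) ≠ 2) :
    closure ({b, a * c} : Set G) ⊓ closure ({a, c} : Set G) ≤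
      closure ({a * c} : Set G) := by
  have hy : (a * c) * (a * c) = 1 := by
    rw [mul_assoc, ← mul_assoc c, ← hac, mul_assoc, hc, mul_one, ha]
  have haD : a ∉ closure ({b, a * c} : Set G) := by
    intro haD
    obtain ⟨k, hk | hk⟩ := aux_dihedral hb hy haD
    · exact hab2 (aux_ord2 ha hb hab1 (aux_comm_of_rot hb hy ha k hk).symm)
    · have hc2 : c = (b * (a*c))^(k+1) := by
        calc c = (a * a) * c := by rw [ha, one_mul]
        _ = a * (a * c) := mul_assoc _ _ _
        _ = ((b*(a*c))^k * b) * (a*c) := by rw [← hk]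
        _ = (b*(a*c))^k * (b * (a*c)) := mul_assoc _ _ _
        _ = (b*(a*c))^(k+1) := (zpow_add_one _ _).symm
      exact hbc2 (aux_ord2 hb hc hbc1 (aux_comm_of_rot hb hy hc (k+1) hc2))
  have hcD : c ∉ closure ({b, a * c} : Set G) := by
    intro hcD
    apply haD
    have h3 : (a * c) * c ∈ closure ({b, a * c} : Set G) :=
      mul_mem (subset_closure (by simp)) hcD
    rwa [mul_assoc, hc, mul_one] at h3
  intro g hg
  obtain ⟨hgD, hgV⟩ := hg
  rcases aux_klein ha hc hac hgV with rfl | rfl | rfl | rfl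
  · exact one_mem _
  · exact absurd hgD haD
  · exact absurd hgD hcD
  · exact subset_closure rfl
end


lemma aux_lt0 {n : ℕ} (hn : 4 ≤ n) : 0 < n := by omega
lemma aux_lt1 {n : ℕ} (hn : 4 ≤ n) : 1 < n := by omega
lemma aux_lt2 {n : ℕ} (hn : 4 ≤ n) : 2 < n := by omega
lemma aux_lt3 {n : ℕ} (hn : 4 ≤ n) : 3 < n := by omega
lemma aux_ltS {n : ℕ} (i : Fin (n - 1)) : i.val + 1 < n := by have := i.isLt; omega

section machinery

/-- index translation for the reduced representation -/
def auxM (K : Set ℕ) : Set ℕ :=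
  {m | (m = 1 ∧ 0 ∈ K) ∨ ((m = 0 ∨ m = 2) ∧ 1 ∈ K) ∨ ∃ k ∈ K, 2 ≤ k ∧ m = k + 1}

lemma auxM_inter (S T : Set ℕ) : auxM S ∩ auxM T = auxM (S ∩ T) := by
  ext m
  constructor
  · rintro ⟨hS, hT⟩
    rcases hS with ⟨rfl, h0S⟩ | ⟨hv, h1S⟩ | ⟨k, hkS, hk2, rfl⟩
    · rcases hT with ⟨-, h0T⟩ | ⟨hv, -⟩ | ⟨k, -, hk2, hk⟩
      · exact Or.inl ⟨rfl, h0S, h0T⟩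
      · omega
      · omega
    · rcases hT with ⟨h1, -⟩ | ⟨-, h1T⟩ | ⟨k, -, hk2, hk⟩
      · omega
      · exact Or.inr (Or.inl ⟨hv, h1S, h1T⟩)
      · omega
    · rcases hT with ⟨h1, -⟩ | ⟨hv, -⟩ | ⟨k', hk'T, hk'2, hk'⟩
      · omega
      · omega
      · exact Or.inr (Or.inr ⟨k, ⟨hkS, by rwa [show k = k' from by omega]⟩, hk2, rfl⟩)
  · rintro (⟨rfl, h0S, h0T⟩ | ⟨hv, h1S, h1T⟩ | ⟨k, ⟨hkS, hkT⟩, hk2, rfl⟩)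
    · exact ⟨Or.inl ⟨rfl, h0S⟩, Or.inl ⟨rfl, h0T⟩⟩
    · exact ⟨Or.inr (Or.inl ⟨hv, h1S⟩), Or.inr (Or.inl ⟨hv, h1T⟩)⟩
    · exact ⟨Or.inr (Or.inr ⟨k, hkS, hk2, rfl⟩), Or.inr (Or.inr ⟨k, hkT, hk2, rfl⟩)⟩

variable {G : Type*} [Group G] {n : ℕ}

/-- closure of the images of `ρ` at indices with value in `S` -/
def Crho (ρ : Fin n → G) (S : Set ℕ) : Subgroup G :=
  closure (ρ '' {i : Fin n | i.val ∈ S})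

lemma Crho_mono (ρ : Fin n → G) {S T : Set ℕ} (h : S ⊆ T) : Crho ρ S ≤ Crho ρ T :=
  closure_mono (Set.image_mono fun _ hi => h hi)

lemma Crho_inter (ρ : Fin n → G)
    (hIP : ∀ I J : Set (Fin n),
      closure (ρ '' I) ⊓ closure (ρ '' J) = closure (ρ '' (I ∩ J)))
    (S T : Set ℕ) : Crho ρ S ⊓ Crho ρ T = Crho ρ (S ∩ T) := by
  have h := hIP {i | i.val ∈ S} {i | i.val ∈ T}
  have hset : ({i : Fin n | i.val ∈ S} ∩ {i | i.val ∈ T}) = {i : Fin n | i.val ∈ S ∩ T} := rfl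
  rw [hset] at h
  exact h

lemma Crho_empty (ρ : Fin n → G) : Crho ρ (∅ : Set ℕ) = ⊥ := by
  have : {i : Fin n | i.val ∈ (∅ : Set ℕ)} = ∅ := by ext i; simp
  rw [Crho, this, Set.image_empty, Subgroup.closure_empty]

lemma rho_cast (ρ : Fin n → G) {k : ℕ} {hk : k < n} {i : Fin n} (h : k = i.val) :
    ρ ⟨k, hk⟩ = ρ i := by
  congr 1
  exact Fin.val_injective h

/-- the reduced sequence of generators -/
def sigmaOf (hn : 4 ≤ n) (ρ : Fin n → G) : Fin (n - 1) → G :=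
  fun i : Fin (n - 1) =>
    if i.val = 0 then ρ ⟨1, aux_lt1 hn⟩
    else if i.val = 1 then ρ ⟨0, aux_lt0 hn⟩ * ρ ⟨2, aux_lt2 hn⟩
    else ρ ⟨i.val + 1, aux_ltS i⟩

variable (hn : 4 ≤ n) (ρ : Fin n → G)

lemma sigmaOf_val0 {i : Fin (n - 1)} (hi : i.val = 0) :
    sigmaOf hn ρ i = ρ ⟨1, aux_lt1 hn⟩ := by
  simp [sigmaOf, hi]

lemma sigmaOf_val1 {i : Fin (n - 1)} (hi : i.val = 1) :
    sigmaOf hn ρ i = ρ ⟨0, aux_lt0 hn⟩ * ρ ⟨2, aux_lt2 hn⟩ := by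
  simp [sigmaOf, hi]

lemma sigmaOf_val2 {i : Fin (n - 1)} (hi : 2 ≤ i.val) :
    sigmaOf hn ρ i = ρ ⟨i.val + 1, aux_ltS i⟩ := by
  have h0 : ¬ i.val = 0 := by omega
  have h1 : ¬ i.val = 1 := by omega
  simp [sigmaOf, h0, h1]

/-- `closure (σ '' K) ≤ Crho ρ (auxM (val '' K))` -/
lemma csig_le_crho (K : Set (Fin (n - 1))) :
    closure (sigmaOf hn ρ '' K) ≤ Crho ρ (auxM (Fin.val '' K)) := by
  rw [closure_le]
  rintro x ⟨a, haK, rfl⟩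
  rcases Nat.lt_or_ge a.val 2 with ha2 | ha2
  · rcases Nat.lt_or_ge a.val 1 with ha1 | ha1
    · have ha0 : a.val = 0 := by omega
      rw [sigmaOf_val0 hn ρ ha0]
      exact subset_closure ⟨⟨1, by omega⟩, Or.inl ⟨rfl, ⟨a, haK, ha0⟩⟩, rfl⟩
    · have ha1' : a.val = 1 := by omega
      rw [sigmaOf_val1 hn ρ ha1']
      exact mul_mem
        (subset_closure ⟨⟨0, by omega⟩, Or.inr (Or.inl ⟨Or.inl rfl, ⟨a, haK, ha1'⟩⟩), rfl⟩)
        (subset_closure ⟨⟨2, by omega⟩, Or.inr (Or.inl ⟨Or.inr rfl, ⟨a, haK, ha1'⟩⟩), rfl⟩)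
  · rw [sigmaOf_val2 hn ρ ha2]
    exact subset_closure ⟨⟨a.val + 1, by have := a.isLt; omega⟩,
      Or.inr (Or.inr ⟨a.val, ⟨a, haK, rfl⟩, ha2, rfl⟩), rfl⟩

end machinery

section machinery2
variable {G : Type*} [Group G] {n : ℕ}

lemma mem_auxM {m : ℕ} {K : Set ℕ} :
    m ∈ auxM K ↔ ((m = 1 ∧ 0 ∈ K) ∨ ((m = 0 ∨ m = 2) ∧ 1 ∈ K) ∨
      ∃ k ∈ K, 2 ≤ k ∧ m = k + 1) := Iff.rfl

variable (hn : 4 ≤ n) (ρ : Fin n → G)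

lemma pure_eq (hsq : ∀ i, ρ i * ρ i = 1)
    (hmem : ρ ⟨0, aux_lt0 hn⟩ ∈
      closure {ρ ⟨0, aux_lt0 hn⟩ * ρ ⟨2, aux_lt2 hn⟩, ρ ⟨3, aux_lt3 hn⟩})
    (K : Set (Fin (n - 1)))
    (hK : (⟨1, by omega⟩ : Fin (n - 1)) ∉ K ∨ (⟨2, by omega⟩ : Fin (n - 1)) ∈ K) :
    closure (sigmaOf hn ρ '' K) = Crho ρ (auxM (Fin.val '' K)) := by
  refine le_antisymm (csig_le_crho hn ρ K) ?_
  rw [Crho, closure_le]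
  rintro x ⟨i, hiM, rfl⟩
  rw [Set.mem_setOf_eq, mem_auxM] at hiM
  rcases hiM with ⟨hi1, a, haK, hav⟩ | ⟨h02, a, haK, hav⟩ | ⟨k, ⟨b, hbK, hbv⟩, hk2, hiv⟩
  · refine subset_closure ⟨a, haK, ?_⟩
    rw [sigmaOf_val0 hn ρ hav]
    exact rho_cast ρ (by omega)
  · have ha : a = ⟨1, by omega⟩ := Fin.val_injective hav
    have h2K : (⟨2, by omega⟩ : Fin (n - 1)) ∈ K := by
      rcases hK with h | h
      · exact absurd (ha ▸ haK) h
      · exact h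
    have hA : ρ ⟨0, by omega⟩ * ρ ⟨2, by omega⟩ ∈ closure (sigmaOf hn ρ '' K) := by
      have h' := subset_closure (Set.mem_image_of_mem (sigmaOf hn ρ) haK)
      rwa [sigmaOf_val1 hn ρ (by rw [ha])] at h'
    have hB : ρ ⟨3, by omega⟩ ∈ closure (sigmaOf hn ρ '' K) := by
      have h' := subset_closure (Set.mem_image_of_mem (sigmaOf hn ρ) h2K)
      have he : sigmaOf hn ρ ⟨2, by omega⟩ = ρ ⟨3, by omega⟩ := by
        rw [sigmaOf_val2 hn ρ (show 2 ≤ (2:ℕ) from le_refl _)]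
      rwa [he] at h'
    have h0 : ρ ⟨0, by omega⟩ ∈ closure (sigmaOf hn ρ '' K) := by
      refine (closure_le _).mpr ?_ hmem
      rintro y (rfl | rfl)
      · exact hA
      · exact hB
    have h2 : ρ ⟨2, by omega⟩ ∈ closure (sigmaOf hn ρ '' K) := by
      have h' := mul_mem h0 hA
      rwa [← mul_assoc, hsq, one_mul] at h'
    rcases h02 with hv | hv
    · rw [← rho_cast ρ (show (0:ℕ) = i.val from hv.symm) (hk := by omega)]
      exact h0
    · rw [← rho_cast ρ (show (2:ℕ) = i.val from hv.symm) (hk := by omega)]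
      exact h2
  · refine subset_closure ⟨b, hbK, ?_⟩
    rw [sigmaOf_val2 hn ρ (by omega)]
    exact rho_cast ρ (by omega)

end machinery2

section machinery3
variable {G : Type*} [Group G] {n : ℕ} (hn : 4 ≤ n) (ρ : Fin n → G)

lemma aux_crux
    (hord : ∀ i, orderOf (ρ i) = 2)
    (hcomm : ∀ i j : Fin n, i.val + 1 < j.val → Commute (ρ i) (ρ j))
    (hIP : ∀ I J : Set (Fin n),
      closure (ρ '' I) ⊓ closure (ρ '' J) = closure (ρ '' (I ∩ J)))
    (hirr01 : orderOf (ρ ⟨0, aux_lt0 hn⟩ * ρ ⟨1, aux_lt1 hn⟩) ≠ 2)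
    (hirr12 : orderOf (ρ ⟨1, aux_lt1 hn⟩ * ρ ⟨2, aux_lt2 hn⟩) ≠ 2)
    (L K : Set (Fin (n - 1))) (hKL : K ⊆ L)
    (h1L : (⟨1, by omega⟩ : Fin (n - 1)) ∈ L)
    (h2L : (⟨2, by omega⟩ : Fin (n - 1)) ∉ L)
    {g : G} (hgL : g ∈ closure (sigmaOf hn ρ '' L))
    (hgM : g ∈ Crho ρ (auxM (Fin.val '' K))) :
    g ∈ closure (sigmaOf hn ρ '' K) := by
  have hsq : ∀ i, ρ i * ρ i = 1 := fun i => by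
    have h' := pow_orderOf_eq_one (ρ i); rwa [hord i, pow_two] at h'
  have hne1 : ∀ i, ρ i ≠ 1 := fun i h => by
    have h' := hord i; rw [h, orderOf_one] at h'; omega
  have hdist : ∀ i j : Fin n, i ≠ j → ρ i ≠ ρ j := by
    intro i j hij hEq
    have h1 : ρ i ∈ closure (ρ '' {i}) ⊓ closure (ρ '' {j}) :=
      ⟨subset_closure ⟨i, rfl, rfl⟩, hEq ▸ subset_closure ⟨j, rfl, rfl⟩⟩
    have hdisj : ({i} ∩ {j} : Set (Fin n)) = ∅ := by
      rw [Set.singleton_inter_eq_empty]; simpa using hij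
    rw [hIP, hdisj, Set.image_empty, Subgroup.closure_empty] at h1
    exact hne1 i (Subgroup.mem_bot.mp h1)
  have h2K : (⟨2, by omega⟩ : Fin (n - 1)) ∉ K := fun h => h2L (hKL h)
  have hval3 : ∀ b : Fin (n - 1), b ∈ L → 2 ≤ b.val → 3 ≤ b.val := by
    intro b hb h2
    rcases Nat.lt_or_ge b.val 3 with h | h
    · exact absurd (by rwa [show b = ⟨2, by omega⟩ from Fin.val_injective (show b.val = 2 by omega)] at hb) h2L
    · exact h
  -- split of the closure over L
  have hLU : L = (L ∩ {k | k.val ≤ 1}) ∪ (L ∩ {k | 2 ≤ k.val}) := by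
    ext a
    constructor
    · intro ha
      rcases Nat.lt_or_ge a.val 2 with h | h
      · exact Or.inl ⟨ha, show a.val ≤ 1 by omega⟩
      · exact Or.inr ⟨ha, h⟩
    · rintro (⟨h, -⟩ | ⟨h, -⟩) <;> exact h
  have hLsplit : sigmaOf hn ρ '' L =
      sigmaOf hn ρ '' (L ∩ {k | k.val ≤ 1}) ∪ sigmaOf hn ρ '' (L ∩ {k | 2 ≤ k.val}) := by
    rw [← Set.image_union, ← hLU]
  have hcommL : ∀ x ∈ sigmaOf hn ρ '' (L ∩ {k | k.val ≤ 1}),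
      ∀ y ∈ sigmaOf hn ρ '' (L ∩ {k | 2 ≤ k.val}), Commute x y := by
    rintro x ⟨a, ⟨haL, ha1⟩, rfl⟩ y ⟨b, ⟨hbL, hb2⟩, rfl⟩
    have ha1' : a.val ≤ 1 := ha1
    have hb3 : 3 ≤ b.val := hval3 b hbL hb2
    rw [sigmaOf_val2 hn ρ hb2]
    rcases Nat.lt_or_ge a.val 1 with h | h
    · rw [sigmaOf_val0 hn ρ (by omega)]
      exact hcomm _ _ (show (1:ℕ) + 1 < b.val + 1 by omega)
    · rw [sigmaOf_val1 hn ρ (by omega)]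
      exact Commute.mul_left (hcomm _ _ (show (0:ℕ) + 1 < b.val + 1 by omega))
        (hcomm _ _ (show (2:ℕ) + 1 < b.val + 1 by omega))
  rw [hLsplit] at hgL
  obtain ⟨d, hdA, r, hrB, hg⟩ := aux_mem_closure_union_comm hcommL hgL
  -- split of the closure over auxM K
  have hMsplit : {i : Fin n | i.val ∈ auxM (Fin.val '' K)} =
      {i : Fin n | i.val ∈ auxM (Fin.val '' K) ∧ i.val ≤ 2} ∪
      {i : Fin n | i.val ∈ auxM (Fin.val '' K) ∧ 4 ≤ i.val} := by
    ext i
    simp only [Set.mem_setOf_eq, Set.mem_union]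
    constructor
    · intro hi
      have hi' := hi
      rw [mem_auxM] at hi'
      rcases hi' with ⟨h1, -⟩ | ⟨h02, -⟩ | ⟨k, ⟨b, hbK, hbv⟩, hk2, hkv⟩
      · exact Or.inl ⟨hi, by omega⟩
      · rcases h02 with h | h
        · exact Or.inl ⟨hi, by omega⟩
        · exact Or.inl ⟨hi, by omega⟩
      · have hb3 : 3 ≤ b.val := hval3 b (hKL hbK) (by omega)
        exact Or.inr ⟨hi, by omega⟩
    · rintro (⟨h, -⟩ | ⟨h, -⟩) <;> exact h
  have hcommM : ∀ x ∈ ρ '' {i : Fin n | i.val ∈ auxM (Fin.val '' K) ∧ i.val ≤ 2},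
      ∀ y ∈ ρ '' {i : Fin n | i.val ∈ auxM (Fin.val '' K) ∧ 4 ≤ i.val}, Commute x y := by
    rintro x ⟨i, ⟨-, hi⟩, rfl⟩ y ⟨j, ⟨-, hj⟩, rfl⟩
    exact hcomm i j (by omega)
  have hgM2 : g ∈ closure (ρ '' {i : Fin n | i.val ∈ auxM (Fin.val '' K) ∧ i.val ≤ 2} ∪
      ρ '' {i : Fin n | i.val ∈ auxM (Fin.val '' K) ∧ 4 ≤ i.val}) := by
    rw [← Set.image_union, ← hMsplit]
    exact hgM
  obtain ⟨d', hd'A, r', hr'B, hg'⟩ := aux_mem_closure_union_comm hcommM hgM2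
  -- place the four components in low/high parts
  have hlow_le : closure (sigmaOf hn ρ '' (L ∩ {k | k.val ≤ 1})) ≤ Crho ρ {m | m ≤ 2} := by
    rw [closure_le]
    rintro x ⟨a, ⟨-, ha1⟩, rfl⟩
    have ha1' : a.val ≤ 1 := ha1
    rcases Nat.lt_or_ge a.val 1 with h | h
    · rw [sigmaOf_val0 hn ρ (by omega)]
      exact subset_closure ⟨⟨1, by omega⟩, show (1:ℕ) ≤ 2 by omega, rfl⟩
    · rw [sigmaOf_val1 hn ρ (by omega)]
      exact mul_mem (subset_closure ⟨⟨0, by omega⟩, show (0:ℕ) ≤ 2 by omega, rfl⟩)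
        (subset_closure ⟨⟨2, by omega⟩, show (2:ℕ) ≤ 2 by omega, rfl⟩)
  have hhigh_le : closure (sigmaOf hn ρ '' (L ∩ {k | 2 ≤ k.val})) ≤ Crho ρ {m | 4 ≤ m} := by
    rw [closure_le]
    rintro x ⟨b, ⟨hbL, hb2⟩, rfl⟩
    have hb3 := hval3 b hbL hb2
    rw [sigmaOf_val2 hn ρ hb2]
    exact subset_closure ⟨⟨b.val + 1, by have := b.isLt; omega⟩,
      show 4 ≤ b.val + 1 by omega, rfl⟩
  have hdlow : d ∈ Crho ρ {m | m ≤ 2} := hlow_le hdA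
  have hrhigh : r ∈ Crho ρ {m | 4 ≤ m} := hhigh_le hrB
  have hd'low : d' ∈ Crho ρ {m | m ≤ 2} :=
    Crho_mono ρ (Set.inter_subset_right)
      (show d' ∈ Crho ρ (auxM (Fin.val '' K) ∩ {m | m ≤ 2}) from hd'A)
  have hr'high : r' ∈ Crho ρ {m | 4 ≤ m} :=
    Crho_mono ρ (Set.inter_subset_right)
      (show r' ∈ Crho ρ (auxM (Fin.val '' K) ∩ {m | 4 ≤ m}) from hr'B)
  -- uniqueness of the decomposition
  have hkey : d'⁻¹ * d = r' * r⁻¹ := by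
    have h6 : d * r = d' * r' := by rw [← hg, ← hg']
    calc d'⁻¹ * d = d'⁻¹ * (d * r) * r⁻¹ := by group
      _ = d'⁻¹ * (d' * r') * r⁻¹ := by rw [h6]
      _ = r' * r⁻¹ := by group
  have h7 : d'⁻¹ * d ∈ Crho ρ {m | m ≤ 2} ⊓ Crho ρ {m | 4 ≤ m} :=
    Subgroup.mem_inf.mpr ⟨mul_mem (inv_mem hd'low) hdlow,
      hkey ▸ mul_mem hr'high (inv_mem hrhigh)⟩
  rw [Crho_inter ρ hIP] at h7
  have hdisj2 : ({m | m ≤ 2} ∩ {m | 4 ≤ m} : Set ℕ) = ∅ := by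
    ext m
    simp only [Set.mem_inter_iff, Set.mem_setOf_eq, Set.mem_empty_iff_false, iff_false]
    omega
  rw [hdisj2, Crho_empty] at h7
  have hdd : d = d' := (inv_mul_eq_one.mp (Subgroup.mem_bot.mp h7)).symm
  have hrr : r = r' := (mul_inv_eq_one.mp (hkey ▸ Subgroup.mem_bot.mp h7)).symm
  -- high part lands in K
  have hrK : r ∈ closure (sigmaOf hn ρ '' K) := by
    rw [hrr]
    have hle : closure (ρ '' {i : Fin n | i.val ∈ auxM (Fin.val '' K) ∧ 4 ≤ i.val}) ≤
        closure (sigmaOf hn ρ '' K) := by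
      rw [closure_le]
      rintro x ⟨i, ⟨hiM, hi4⟩, rfl⟩
      rw [mem_auxM] at hiM
      rcases hiM with ⟨h1, -⟩ | ⟨h02, -⟩ | ⟨k, ⟨b, hbK, hbv⟩, hk2, hkv⟩
      · omega
      · rcases h02 with h | h <;> omega
      · refine subset_closure ⟨b, hbK, ?_⟩
        rw [sigmaOf_val2 hn ρ (by omega)]
        exact rho_cast ρ (by omega)
    exact hle hr'B
  -- low part lands in K
  have hdK : d ∈ closure (sigmaOf hn ρ '' K) := by
    by_cases h1K : (⟨1, by omega⟩ : Fin (n - 1)) ∈ K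
    · by_cases h0K : (⟨0, by omega⟩ : Fin (n - 1)) ∈ K
      · refine closure_mono (Set.image_mono ?_) hdA
        rintro a ⟨-, ha1⟩
        have ha1' : a.val ≤ 1 := ha1
        rcases Nat.lt_or_ge a.val 1 with h | h
        · rwa [show a = ⟨0, by omega⟩ from Fin.val_injective (show a.val = 0 by omega)]
        · rwa [show a = ⟨1, by omega⟩ from Fin.val_injective (show a.val = 1 by omega)]
      · -- the hard case:  Mlow = {0,2}
        have hMlow : {i : Fin n | i.val ∈ auxM (Fin.val '' K) ∧ i.val ≤ 2} =
            {(⟨0, by omega⟩ : Fin n), ⟨2, by omega⟩} := by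
          ext i
          simp only [Set.mem_setOf_eq, Set.mem_insert_iff, Set.mem_singleton_iff, mem_auxM]
          constructor
          · rintro ⟨⟨h1, b, hbK, hbv⟩ | ⟨h02, -⟩ | ⟨k, ⟨b, hbK, hbv⟩, hk2, hkv⟩, hle⟩
            · exact absurd (by rwa [show b = ⟨0, by omega⟩ from Fin.val_injective hbv] at hbK) h0K
            · rcases h02 with h | h
              · exact Or.inl (Fin.val_injective h)
              · exact Or.inr (Fin.val_injective h)
            · have hb3 : 3 ≤ b.val := hval3 b (hKL hbK) (by omega)
              omega
          · rintro (rfl | rfl)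
            · exact ⟨Or.inr (Or.inl ⟨Or.inl rfl, ⟨⟨1, by omega⟩, h1K, rfl⟩⟩),
                show (0:ℕ) ≤ 2 by omega⟩
            · exact ⟨Or.inr (Or.inl ⟨Or.inr rfl, ⟨⟨1, by omega⟩, h1K, rfl⟩⟩),
                show (2:ℕ) ≤ 2 by omega⟩
        have hdpair : d ∈ closure {ρ (⟨0, by omega⟩ : Fin n), ρ ⟨2, by omega⟩} := by
          rw [hdd]
          have h' := hd'A
          rwa [hMlow, Set.image_pair] at h'
        have hsig1K : sigmaOf hn ρ ⟨1, by omega⟩ ∈ sigmaOf hn ρ '' K :=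
          Set.mem_image_of_mem _ h1K
        by_cases h0L : (⟨0, by omega⟩ : Fin (n - 1)) ∈ L
        · -- dihedral case, use aux_L3
          have hAL : L ∩ {k : Fin (n - 1) | k.val ≤ 1} =
              {⟨0, by omega⟩, ⟨1, by omega⟩} := by
            ext a
            simp only [Set.mem_inter_iff, Set.mem_setOf_eq, Set.mem_insert_iff,
              Set.mem_singleton_iff]
            constructor
            · rintro ⟨haL, ha1⟩
              rcases Nat.lt_or_ge a.val 1 with h | h
              · exact Or.inl (Fin.val_injective (show a.val = 0 by omega))
              · exact Or.inr (Fin.val_injective (show a.val = 1 by omega))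
            · rintro (rfl | rfl)
              · exact ⟨h0L, show (0:ℕ) ≤ 1 by omega⟩
              · exact ⟨h1L, le_refl _⟩
          have hdD : d ∈ closure {ρ (⟨1, by omega⟩ : Fin n),
              ρ ⟨0, by omega⟩ * ρ ⟨2, by omega⟩} := by
            have h' := hdA
            rw [hAL, Set.image_pair, sigmaOf_val0 hn ρ rfl, sigmaOf_val1 hn ρ rfl] at h'
            exact h'
          have hfinal := aux_L3 (hsq ⟨0, by omega⟩) (hsq ⟨1, by omega⟩) (hsq ⟨2, by omega⟩)
            ((hcomm ⟨0, by omega⟩ ⟨2, by omega⟩ (show (0:ℕ) + 1 < 2 by omega)).eq)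
            (hdist _ _ (fun hEq => by
              have := congrArg Fin.val hEq
              simp only [] at this
              omega))
            (hdist _ _ (fun hEq => by
              have := congrArg Fin.val hEq
              simp only [] at this
              omega))
            hirr01 hirr12 (Subgroup.mem_inf.mpr ⟨hdD, hdpair⟩)
          refine closure_mono ?_ hfinal
          intro x hx
          rw [hx]
          exact ⟨⟨1, by omega⟩, h1K, sigmaOf_val1 hn ρ rfl⟩
        · -- A_L = {⟨1⟩}
          have hAL : L ∩ {k : Fin (n - 1) | k.val ≤ 1} = {⟨1, by omega⟩} := by
            ext a
            simp only [Set.mem_inter_iff, Set.mem_setOf_eq, Set.mem_singleton_iff]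
            constructor
            · rintro ⟨haL, ha1⟩
              rcases Nat.lt_or_ge a.val 1 with h | h
              · exact absurd (by
                  rwa [show a = ⟨0, by omega⟩ from Fin.val_injective (show a.val = 0 by omega)] at haL) h0L
              · exact Fin.val_injective (show a.val = 1 by omega)
            · rintro rfl
              exact ⟨h1L, le_refl _⟩
          have h' := hdA
          rw [hAL, Set.image_singleton] at h'
          refine closure_mono ?_ h'
          intro x hx
          rw [hx]
          exact ⟨⟨1, by omega⟩, h1K, rfl⟩
    · by_cases h0K : (⟨0, by omega⟩ : Fin (n - 1)) ∈ K
      · have hMlow : {i : Fin n | i.val ∈ auxM (Fin.val '' K) ∧ i.val ≤ 2} =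
            {(⟨1, by omega⟩ : Fin n)} := by
          ext i
          simp only [Set.mem_setOf_eq, Set.mem_singleton_iff, mem_auxM]
          constructor
          · rintro ⟨⟨h1, -⟩ | ⟨-, b, hbK, hbv⟩ | ⟨k, ⟨b, hbK, hbv⟩, hk2, hkv⟩, hle⟩
            · exact Fin.val_injective h1
            · exact absurd (by rwa [show b = ⟨1, by omega⟩ from Fin.val_injective hbv] at hbK) h1K
            · have hb3 : 3 ≤ b.val := hval3 b (hKL hbK) (by omega)
              omega
          · rintro rfl
            exact ⟨Or.inl ⟨rfl, ⟨⟨0, by omega⟩, h0K, rfl⟩⟩, show (1:ℕ) ≤ 2 by omega⟩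
        have h' := hd'A
        rw [hMlow, Set.image_singleton] at h'
        rw [hdd]
        refine closure_mono ?_ h'
        intro x hx
        rw [hx]
        exact ⟨⟨0, by omega⟩, h0K, sigmaOf_val0 hn ρ rfl⟩
      · have hMlow : {i : Fin n | i.val ∈ auxM (Fin.val '' K) ∧ i.val ≤ 2} =
            (∅ : Set (Fin n)) := by
          ext i
          simp only [Set.mem_setOf_eq, Set.mem_empty_iff_false, iff_false, mem_auxM]
          rintro ⟨⟨h1, b, hbK, hbv⟩ | ⟨-, b, hbK, hbv⟩ | ⟨k, ⟨b, hbK, hbv⟩, hk2, hkv⟩, hle⟩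
          · exact h0K (by rwa [show b = ⟨0, by omega⟩ from Fin.val_injective hbv] at hbK)
          · exact h1K (by rwa [show b = ⟨1, by omega⟩ from Fin.val_injective hbv] at hbK)
          · have hb3 : 3 ≤ b.val := hval3 b (hKL hbK) (by omega)
            omega
        have h' := hd'A
        rw [hMlow, Set.image_empty, Subgroup.closure_empty] at h'
        rw [hdd, Subgroup.mem_bot.mp h']
        exact one_mem _
  rw [hg]
  exact mul_mem hdK hrK

end machinery3

theorem aux_main {G : Type*} [Group G] {n : ℕ} (hn : 4 ≤ n) (ρ : Fin n → G)
    (h : IsStringCGroupRep ρ)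
    (hirr01 : orderOf (ρ ⟨0, aux_lt0 hn⟩ * ρ ⟨1, aux_lt1 hn⟩) ≠ 2)
    (hirr12 : orderOf (ρ ⟨1, aux_lt1 hn⟩ * ρ ⟨2, aux_lt2 hn⟩) ≠ 2)
    (hmem : ρ ⟨0, aux_lt0 hn⟩ ∈
      Subgroup.closure {ρ ⟨0, aux_lt0 hn⟩ * ρ ⟨2, aux_lt2 hn⟩, ρ ⟨3, aux_lt3 hn⟩}) :
    IsStringCGroupRep (sigmaOf hn ρ) := by
  obtain ⟨hord, hgen, hcomm, hIP⟩ := h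
  have hsq : ∀ i, ρ i * ρ i = 1 := fun i => by
    have h' := pow_orderOf_eq_one (ρ i); rwa [hord i, pow_two] at h'
  have hne1 : ∀ i, ρ i ≠ 1 := fun i h => by
    have h' := hord i; rw [h, orderOf_one] at h'; omega
  have hdist : ∀ i j : Fin n, i ≠ j → ρ i ≠ ρ j := by
    intro i j hij hEq
    have h1 : ρ i ∈ closure (ρ '' {i}) ⊓ closure (ρ '' {j}) :=
      Subgroup.mem_inf.mpr ⟨subset_closure ⟨i, rfl, rfl⟩, hEq ▸ subset_closure ⟨j, rfl, rfl⟩⟩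
    have hdisj : ({i} ∩ {j} : Set (Fin n)) = ∅ := by
      rw [Set.singleton_inter_eq_empty]; simpa using hij
    rw [hIP, hdisj, Set.image_empty, Subgroup.closure_empty] at h1
    exact hne1 i (Subgroup.mem_bot.mp h1)
  refine ⟨?_, ?_, ?_, ?_⟩
  · -- involutions
    intro i
    rcases Nat.lt_or_ge i.val 2 with h2 | h2
    · rcases Nat.lt_or_ge i.val 1 with h1 | h1
      · rw [sigmaOf_val0 hn ρ (by omega)]; exact hord _
      · rw [sigmaOf_val1 hn ρ (by omega)]
        exact aux_ord2 (hsq _) (hsq _)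
          (hdist _ _ (fun hEq => by
            have h' := congrArg Fin.val hEq
            exact absurd (show (0:ℕ) = 2 from h') (by omega)))
          ((hcomm _ _ (show (0:ℕ) + 1 < 2 by omega)).eq)
    · rw [sigmaOf_val2 hn ρ h2]; exact hord _
  · -- generation
    rw [eq_top_iff, ← hgen, closure_le]
    rintro x ⟨i, rfl⟩
    have hτ : ∀ j : Fin (n - 1), sigmaOf hn ρ j ∈ closure (Set.range (sigmaOf hn ρ)) :=
      fun j => subset_closure ⟨j, rfl⟩
    have h1m : ρ (⟨1, by omega⟩ : Fin n) ∈ closure (Set.range (sigmaOf hn ρ)) := by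
      have h' := hτ ⟨0, by omega⟩
      rwa [sigmaOf_val0 hn ρ rfl] at h'
    have hAm : ρ (⟨0, by omega⟩ : Fin n) * ρ ⟨2, by omega⟩ ∈
        closure (Set.range (sigmaOf hn ρ)) := by
      have h' := hτ ⟨1, by omega⟩
      rwa [sigmaOf_val1 hn ρ rfl] at h'
    have h3m : ρ (⟨3, by omega⟩ : Fin n) ∈ closure (Set.range (sigmaOf hn ρ)) := by
      have h' := hτ ⟨2, by omega⟩
      rwa [sigmaOf_val2 hn ρ (show 2 ≤ (2:ℕ) from le_refl _)] at h'
    have h0m : ρ (⟨0, by omega⟩ : Fin n) ∈ closure (Set.range (sigmaOf hn ρ)) := by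
      refine (closure_le _).mpr ?_ hmem
      rintro y (rfl | rfl)
      · exact hAm
      · exact h3m
    have h2m : ρ (⟨2, by omega⟩ : Fin n) ∈ closure (Set.range (sigmaOf hn ρ)) := by
      have hx := mul_mem h0m hAm
      rwa [← mul_assoc, hsq, one_mul] at hx
    rcases Nat.lt_or_ge i.val 3 with h3 | h3
    · rcases Nat.lt_or_ge i.val 1 with h1 | h1
      · rwa [show i = ⟨0, by omega⟩ from Fin.val_injective (show i.val = 0 by omega)]
      · rcases Nat.lt_or_ge i.val 2 with h2 | h2
        · rwa [show i = ⟨1, by omega⟩ from Fin.val_injective (show i.val = 1 by omega)]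
        · rwa [show i = ⟨2, by omega⟩ from Fin.val_injective (show i.val = 2 by omega)]
    · have h' := hτ ⟨i.val - 1, by have := i.isLt; omega⟩
      rwa [sigmaOf_val2 hn ρ (show 2 ≤ i.val - 1 by omega),
        rho_cast ρ (show i.val - 1 + 1 = i.val by omega)] at h'
  · -- string property
    intro i j hij
    have hj2 : 2 ≤ j.val := by omega
    rw [sigmaOf_val2 hn ρ hj2]
    rcases Nat.lt_or_ge i.val 2 with h2 | h2
    · rcases Nat.lt_or_ge i.val 1 with h1 | h1
      · rw [sigmaOf_val0 hn ρ (by omega)]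
        exact hcomm _ _ (show (1:ℕ) + 1 < j.val + 1 by omega)
      · rw [sigmaOf_val1 hn ρ (by omega)]
        exact Commute.mul_left (hcomm _ _ (show (0:ℕ) + 1 < j.val + 1 by omega))
          (hcomm _ _ (show (2:ℕ) + 1 < j.val + 1 by omega))
    · rw [sigmaOf_val2 hn ρ h2]
      exact hcomm _ _ (show i.val + 1 + 1 < j.val + 1 by omega)
  · -- intersection property
    intro I J
    refine le_antisymm ?_ (le_inf (closure_mono (Set.image_mono Set.inter_subset_left))
      (closure_mono (Set.image_mono Set.inter_subset_right)))
    intro g hg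
    obtain ⟨hgI, hgJ⟩ := Subgroup.mem_inf.mp hg
    have hgM : g ∈ Crho ρ (auxM (Fin.val '' (I ∩ J))) := by
      have h1 := csig_le_crho hn ρ I hgI
      have h2 := csig_le_crho hn ρ J hgJ
      have h3 : g ∈ Crho ρ (auxM (Fin.val '' I)) ⊓ Crho ρ (auxM (Fin.val '' J)) :=
        Subgroup.mem_inf.mpr ⟨h1, h2⟩
      rwa [Crho_inter ρ hIP, auxM_inter, ← Set.image_inter Fin.val_injective] at h3
    by_cases hI : (⟨1, by omega⟩ : Fin (n - 1)) ∈ I ∧ (⟨2, by omega⟩ : Fin (n - 1)) ∉ I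
    · exact aux_crux hn ρ hord hcomm hIP hirr01 hirr12 I (I ∩ J)
        Set.inter_subset_left hI.1 hI.2 hgI hgM
    by_cases hJ : (⟨1, by omega⟩ : Fin (n - 1)) ∈ J ∧ (⟨2, by omega⟩ : Fin (n - 1)) ∉ J
    · exact aux_crux hn ρ hord hcomm hIP hirr01 hirr12 J (I ∩ J)
        Set.inter_subset_right hJ.1 hJ.2 hgJ hgM
    · have hpure : (⟨1, by omega⟩ : Fin (n - 1)) ∉ I ∩ J ∨
          (⟨2, by omega⟩ : Fin (n - 1)) ∈ I ∩ J := by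
        by_cases h1 : (⟨1, by omega⟩ : Fin (n - 1)) ∈ I ∩ J
        · right
          constructor
          · by_contra h2
            exact hI ⟨h1.1, h2⟩
          · by_contra h2
            exact hJ ⟨h1.2, h2⟩
        · exact Or.inl h1
      rw [pure_eq hn ρ hsq hmem (I ∩ J) hpure]
      exact hgM

end RankReductionAux

/-- Rank reduction: if `(G; (ρ₀, …, ρ_{n-1}))` is an irreducible string C-group
representation of rank `n ≥ 4` and `ρ₀ ∈ ⟨ρ₀ρ₂, ρ₃⟩`, then
`(G; (ρ₁, ρ₀ρ₂, ρ₃, …, ρ_{n-1}))` is a string C-group representation of rank `n - 1`. -/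
theorem rank_reduction {G : Type*} [Group G] (n : ℕ) (hn : 4 ≤ n) (ρ : Fin n → G)
    (h : IsStringCGroupRep ρ)
    (hirr : ∀ (i : ℕ) (hi : i + 1 < n), orderOf (ρ ⟨i, by omega⟩ * ρ ⟨i + 1, hi⟩) ≠ 2)
    (hmem : ρ ⟨0, by omega⟩ ∈
      Subgroup.closure {ρ ⟨0, by omega⟩ * ρ ⟨2, by omega⟩, ρ ⟨3, by omega⟩}) :
    IsStringCGroupRep (fun i : Fin (n - 1) =>
      if i.val = 0 then ρ ⟨1, by omega⟩
      else if i.val = 1 then ρ ⟨0, by omega⟩ * ρ ⟨2, by omega⟩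
      else ρ ⟨i.val + 1, by have := i.isLt; omega⟩) := by
  exact aux_main hn ρ h (hirr 0 (by omega)) (hirr 1 (by omega)) hmem
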